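/- Define H : ℝ³ → ℝ by H(ξ) = ‖ξ‖·√(2 + ‖ξ‖²), with gradient ∇H(η) = h'(‖η‖)·η/‖η‖ for η ≠ 0, where h'(r) = 2(1+r²)/√(2+r²). Then for all nonzero x, y ∈ ℝ³: ‖∇H(x) + ∇H(y)‖ ≥ max( √2·‖x/‖x‖ + y/‖y‖‖ , |h'(‖x‖) - h'(‖y‖)| ). -/

import Mathlib

open Real RealInnerProductSpace

local notation "E3" => EuclideanSpace ℝ (Fin 3)

/-- h'(r) ≥ √2 for r ≥ 0. -/
lemma hp_ge_sqrt2 (r : ℝ) (hr : 0 ≤ r) :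
    Real.sqrt 2 ≤ 2 * (1 + r ^ 2) / Real.sqrt (2 + r ^ 2) := by
  have h2 : (0:ℝ) < 2 + r ^ 2 := by positivity
  have hs : 0 < Real.sqrt (2 + r ^ 2) := Real.sqrt_pos.2 h2
  rw [le_div_iff₀ hs]
  have hss : Real.sqrt (2 + r ^ 2) ^ 2 = 2 + r ^ 2 := Real.sq_sqrt h2.le
  have h2s : Real.sqrt 2 ^ 2 = 2 := Real.sq_sqrt (by norm_num)
  nlinarith [Real.sqrt_nonneg (2:ℝ), Real.sqrt_nonneg (2 + r ^ 2), sq_nonneg r,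
    sq_nonneg (Real.sqrt 2 * Real.sqrt (2 + r ^ 2) - 2), sq_nonneg (r^2)]

/-- h' is monotone on [0, ∞). -/
lemma hp_mono {a b : ℝ} (hb : 0 ≤ b) (hba : b ≤ a) :
    2 * (1 + b ^ 2) / Real.sqrt (2 + b ^ 2) ≤ 2 * (1 + a ^ 2) / Real.sqrt (2 + a ^ 2) := by
  have h2a : (0:ℝ) < 2 + a ^ 2 := by positivity
  have h2b : (0:ℝ) < 2 + b ^ 2 := by positivity
  have hsa : 0 < Real.sqrt (2 + a ^ 2) := Real.sqrt_pos.2 h2a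
  have hsb : 0 < Real.sqrt (2 + b ^ 2) := Real.sqrt_pos.2 h2b
  rw [div_le_div_iff₀ hsb hsa]
  have hssa : Real.sqrt (2 + a ^ 2) ^ 2 = 2 + a ^ 2 := Real.sq_sqrt h2a.le
  have hssb : Real.sqrt (2 + b ^ 2) ^ 2 = 2 + b ^ 2 := Real.sq_sqrt h2b.le
  have ha : 0 ≤ a := hb.trans hba
  -- compare squares
  nlinarith [mul_pos hsa hsb, sq_nonneg (a - b), sq_nonneg (a + b), sq_nonneg (a*b),
    mul_le_mul hba hba hb ha,
    sq_nonneg (2 * (1 + b ^ 2) * Real.sqrt (2 + a ^ 2) - 2 * (1 + a ^ 2) * Real.sqrt (2 + b ^ 2))]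

/-- Key geometric estimate for unit vectors. -/
lemma key_ineq {E : Type*} [NormedAddCommGroup E] [InnerProductSpace ℝ E]
    (u v : E) (hu : ‖u‖ = 1) (hv : ‖v‖ = 1) {A B : ℝ}
    (hB : Real.sqrt 2 ≤ B) (hAB : B ≤ A) :
    max (Real.sqrt 2 * ‖u + v‖) |A - B| ≤ ‖A • u + B • v‖ := by
  have hB0 : 0 ≤ B := le_trans (Real.sqrt_nonneg 2) hB
  have hsplit : A • u + B • v = B • (u + v) + (A - B) • u := by
    rw [smul_add, sub_smul]; abel
  set s := B • (u + v)
  set t := (A - B) • u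
  have hinner : 0 ≤ ⟪s, t⟫ := by
    have h1 : ⟪s, t⟫ = B * (A - B) * (⟪u, u⟫ + ⟪v, u⟫) := by
      simp [s, t, inner_smul_left, inner_smul_right, inner_add_left]; ring
    have h2 : ⟪u, u⟫ = 1 := by rw [real_inner_self_eq_norm_sq, hu]; norm_num
    have h3 : |⟪v, u⟫| ≤ 1 := by
      have := abs_real_inner_le_norm v u
      rwa [hu, hv, one_mul] at this
    have h4 : -1 ≤ ⟪v, u⟫ := neg_le_of_abs_le h3
    rw [h1, h2]
    have h5 : 0 ≤ 1 + ⟪v, u⟫ := by linarith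
    exact mul_nonneg (mul_nonneg hB0 (sub_nonneg.2 hAB)) h5
  have hsq : ‖s + t‖ ^ 2 = ‖s‖ ^ 2 + 2 * ⟪s, t⟫ + ‖t‖ ^ 2 := norm_add_sq_real s t
  have hst := norm_nonneg (s + t)
  have hns := norm_nonneg s
  have hnt := norm_nonneg t
  have hge_s : ‖s‖ ≤ ‖s + t‖ := by nlinarith
  have hge_t : ‖t‖ ≤ ‖s + t‖ := by nlinarith
  rw [hsplit]
  apply max_le
  · calc Real.sqrt 2 * ‖u + v‖ ≤ B * ‖u + v‖ :=
          mul_le_mul_of_nonneg_right hB (norm_nonneg _)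
      _ = ‖s‖ := by rw [norm_smul, Real.norm_eq_abs, abs_of_nonneg hB0]
      _ ≤ ‖s + t‖ := hge_s
  · calc |A - B| = ‖t‖ := by
          rw [norm_smul, Real.norm_eq_abs, hu, mul_one]
      _ ≤ ‖s + t‖ := hge_t

/-- Gradient computation. -/
lemma grad_eq (H : E3 → ℝ)
    (hH : ∀ ξ : E3, H ξ = ‖ξ‖ * Real.sqrt (2 + ‖ξ‖ ^ 2))
    (x : E3) (hx : x ≠ 0) :
    gradient H x = (2 * (1 + ‖x‖ ^ 2) / Real.sqrt (2 + ‖x‖ ^ 2)) • (‖x‖⁻¹ • x) := by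
  have ha : 0 < ‖x‖ := norm_pos_iff.2 hx
  set a := ‖x‖ with ha_def
  have hHeq : H = fun ξ : E3 => Real.sqrt (2 * ‖ξ‖ ^ 2 + (‖ξ‖ ^ 2) ^ 2) := by
    funext ξ
    rw [hH ξ]
    have : 2 * ‖ξ‖ ^ 2 + (‖ξ‖ ^ 2) ^ 2 = ‖ξ‖ ^ 2 * (2 + ‖ξ‖ ^ 2) := by ring
    rw [this, Real.sqrt_mul (sq_nonneg _), Real.sqrt_sq (norm_nonneg _)]
  -- derivative of the squared norm
  have hs : HasFDerivAt (fun ξ : E3 => ‖ξ‖ ^ 2) (2 • (innerSL ℝ x)) x := by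
    simpa using (hasFDerivAt_id x).norm_sq
  -- scalar part
  set t : ℝ := a ^ 2 with ht_def
  have htpos : 0 < 2 * t + t ^ 2 := by positivity
  have hpoly : HasDerivAt (fun s : ℝ => 2 * s + s ^ 2) (2 + 2 * t) t := by
    have h1 : HasDerivAt (fun s : ℝ => 2 * s) 2 t := by
      simpa using (hasDerivAt_id t).const_mul (2:ℝ)
    have h2 : HasDerivAt (fun s : ℝ => s ^ 2) (2 * t) t := by
      simpa using hasDerivAt_pow 2 t
    exact h1.add h2
  have hsqrt : HasDerivAt (fun s : ℝ => Real.sqrt (2 * s + s ^ 2))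
      (1 / (2 * Real.sqrt (2 * t + t ^ 2)) * (2 + 2 * t)) t :=
    (Real.hasDerivAt_sqrt htpos.ne').comp t hpoly
  have hcomp : HasFDerivAt H
      ((1 / (2 * Real.sqrt (2 * t + t ^ 2)) * (2 + 2 * t)) • (2 • (innerSL ℝ x))) x := by
    rw [hHeq]
    have := hsqrt.comp_hasFDerivAt x hs; exact this
  -- identify with toDual of the claimed gradient
  have hsqrt_t : Real.sqrt (2 * t + t ^ 2) = a * Real.sqrt (2 + a ^ 2) := by
    have : 2 * t + t ^ 2 = a ^ 2 * (2 + a ^ 2) := by rw [ht_def]; ring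
    rw [this, Real.sqrt_mul (sq_nonneg _), Real.sqrt_sq ha.le]
  have hs2 : 0 < Real.sqrt (2 + a ^ 2) := Real.sqrt_pos.2 (by positivity)
  have hgrad : HasGradientAt H
      ((2 * (1 + a ^ 2) / Real.sqrt (2 + a ^ 2)) • (a⁻¹ • x)) x := by
    rw [hasGradientAt_iff_hasFDerivAt]
    refine HasFDerivAt.congr_fderiv hcomp ?_
    ext v
    simp only [InnerProductSpace.toDual_apply_apply, inner_smul_left, ContinuousLinearMap.smul_apply,
      ContinuousLinearMap.coe_smul', Pi.smul_apply, innerSL_apply_apply, RCLike.star_def, conj_trivial,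
      smul_eq_mul]
    rw [hsqrt_t, ht_def]
    field_simp
    ring
  exact hgrad.gradient

/-- For `H(ξ) = ‖ξ‖·√(2 + ‖ξ‖²)` on `ℝ³` (so `∇H(η) = h'(‖η‖)·η/‖η‖` with
`h'(r) = 2(1+r²)/√(2+r²)`), for all nonzero `x, y`:
`‖∇H(x) + ∇H(y)‖ ≥ max(√2·‖x/‖x‖ + y/‖y‖‖, |h'(‖x‖) - h'(‖y‖)|)`. -/
theorem stmt_17 (H : EuclideanSpace ℝ (Fin 3) → ℝ)
    (hH : ∀ ξ : EuclideanSpace ℝ (Fin 3), H ξ = ‖ξ‖ * Real.sqrt (2 + ‖ξ‖ ^ 2))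
    (x y : EuclideanSpace ℝ (Fin 3)) (hx : x ≠ 0) (hy : y ≠ 0) :
    max (Real.sqrt 2 * ‖‖x‖⁻¹ • x + ‖y‖⁻¹ • y‖)
        |2 * (1 + ‖x‖ ^ 2) / Real.sqrt (2 + ‖x‖ ^ 2) -
          2 * (1 + ‖y‖ ^ 2) / Real.sqrt (2 + ‖y‖ ^ 2)| ≤
      ‖gradient H x + gradient H y‖ := by
  rw [grad_eq H hH x hx, grad_eq H hH y hy]
  set u : EuclideanSpace ℝ (Fin 3) := ‖x‖⁻¹ • x with hu_def
  set v : EuclideanSpace ℝ (Fin 3) := ‖y‖⁻¹ • y with hv_def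
  have hu : ‖u‖ = 1 := norm_smul_inv_norm hx
  have hv : ‖v‖ = 1 := norm_smul_inv_norm hy
  set A := 2 * (1 + ‖x‖ ^ 2) / Real.sqrt (2 + ‖x‖ ^ 2) with hA_def
  set B := 2 * (1 + ‖y‖ ^ 2) / Real.sqrt (2 + ‖y‖ ^ 2) with hB_def
  rcases le_total ‖y‖ ‖x‖ with h | h
  · exact key_ineq u v hu hv (hp_ge_sqrt2 _ (norm_nonneg y)) (hp_mono (norm_nonneg y) h)
  · have := key_ineq v u hv hu (hp_ge_sqrt2 _ (norm_nonneg x)) (hp_mono (norm_nonneg x) h)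
    rwa [add_comm v u, abs_sub_comm B A, add_comm (B • v) (A • u)] at this
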